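/- Consider a heterogeneous game Γ(n,T,x,y,z) with y > 0 and z > 0. Let (T_1, T_2) be a partition of T into two nonempty sets, X_1 = ∑_{t∈T_1} x_t and X_2 = ∑_{t∈T_2} x_t, and suppose X_2 < (1 − 1/n)·ζ. Then a_1 := ((n−1)·ζ − n·X_2)/(n·X_1 − 1) satisfies 0 < a_1 < 1, and the strategy α* taking value a_1 on T_1 and value 1 on T_2 is a symmetric Nash equilibrium. -/

import Mathlib

open Finset

noncomputable def U {T : Type*} [Fintype T] (n : ℕ) (x : T → ℝ) (y z : ℝ)
    (α β : T → ℝ) : ℝ :=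
  z * ∑ j, x j * β j +
    ∑ j, (x j / ((n : ℝ) - 1)) *
      (((n : ℝ) - 1) * y + (y + z) * β j - (n : ℝ) * (y + z) * ∑ i, x i * β i) * α j

def IsStrategy {T : Type*} (α : T → ℝ) : Prop :=
  ∀ t, α t ∈ Set.Icc (0 : ℝ) 1

def IsSymNash {T : Type*} [Fintype T] (n : ℕ) (x : T → ℝ) (y z : ℝ)
    (α : T → ℝ) : Prop :=
  IsStrategy α ∧ ∀ β : T → ℝ, IsStrategy β → U n x y z β α ≤ U n x y z α α

theorem stmt10 {T : Type*} [Fintype T] [DecidableEq T] (hT : 2 ≤ Fintype.card T)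
    (n : ℕ) (x : T → ℝ) (hx : ∑ t, x t = 1)
    (hxt : ∀ t : T, 1 < (n : ℝ) * x t ∧ (n : ℝ) * x t < n)
    (y z : ℝ) (hy : 0 < y) (hz : 0 < z)
    (T1 T2 : Finset T) (hT1 : T1.Nonempty) (hT2 : T2.Nonempty)
    (hdisj : Disjoint T1 T2) (hcover : T1 ∪ T2 = Finset.univ)
    (hX2 : ∑ t ∈ T2, x t < (1 - 1 / (n : ℝ)) * (y / (y + z))) :
    (0 < (((n : ℝ) - 1) * (y / (y + z)) - (n : ℝ) * ∑ t ∈ T2, x t) /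
           ((n : ℝ) * ∑ t ∈ T1, x t - 1) ∧
     (((n : ℝ) - 1) * (y / (y + z)) - (n : ℝ) * ∑ t ∈ T2, x t) /
           ((n : ℝ) * ∑ t ∈ T1, x t - 1) < 1) ∧
    IsSymNash n x y z
      (fun t => if t ∈ T1 then
          (((n : ℝ) - 1) * (y / (y + z)) - (n : ℝ) * ∑ t ∈ T2, x t) /
            ((n : ℝ) * ∑ t ∈ T1, x t - 1)
        else 1) := by
  have hyz : 0 < y + z := by linarith
  set ζ : ℝ := y / (y + z) with hζdef
  set X1 : ℝ := ∑ t ∈ T1, x t with hX1def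
  set X2 : ℝ := ∑ t ∈ T2, x t with hX2def
  have hζ0 : 0 < ζ := div_pos hy hyz
  have hζ1 : ζ < 1 := by rw [hζdef, div_lt_one hyz]; linarith
  have hζy : ζ * (y + z) = y := div_mul_cancel₀ y (ne_of_gt hyz)
  obtain ⟨t0, ht0⟩ := hT1
  have hn1 : (1 : ℝ) < n := lt_trans (hxt t0).1 (hxt t0).2
  have hnpos : (0 : ℝ) < n := by linarith
  have hn1' : (0 : ℝ) < (n : ℝ) - 1 := by linarith
  have hxpos : ∀ t : T, 0 < x t := fun t => by nlinarith [(hxt t).1]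
  have hX1t : x t0 ≤ X1 :=
    Finset.single_le_sum (fun i _ => le_of_lt (hxpos i)) ht0
  have hden : 0 < (n : ℝ) * X1 - 1 := by nlinarith [(hxt t0).1]
  have hX12 : X1 + X2 = 1 := by
    rw [hX1def, hX2def, ← Finset.sum_union hdisj, hcover, hx]
  have hnum : 0 < ((n : ℝ) - 1) * ζ - (n : ℝ) * X2 := by
    have h1 : (n : ℝ) * X2 < (n : ℝ) * ((1 - 1 / n) * ζ) :=
      mul_lt_mul_of_pos_left hX2 hnpos
    have h2 : (n : ℝ) * ((1 - 1 / n) * ζ) = ((n : ℝ) - 1) * ζ := by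
      field_simp
    linarith
  set a : ℝ := (((n : ℝ) - 1) * ζ - (n : ℝ) * X2) / ((n : ℝ) * X1 - 1) with hadef
  have ha0 : 0 < a := div_pos hnum hden
  have ha1 : a < 1 := by
    rw [hadef, div_lt_one hden]
    nlinarith [mul_lt_mul_of_pos_left hζ1 hn1']
  refine ⟨⟨ha0, ha1⟩, ?_, ?_⟩
  · intro t
    by_cases h : t ∈ T1 <;> simp [h, le_of_lt ha0, le_of_lt ha1]
  · intro β hβ
    have hkey : a * ((n : ℝ) * X1 - 1) = ((n : ℝ) - 1) * ζ - (n : ℝ) * X2 := by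
      rw [hadef]; field_simp
    have hS : ∑ i, x i * (if i ∈ T1 then a else 1) = a * X1 + X2 := by
      rw [← hcover, Finset.sum_union hdisj]
      have e1 : ∑ i ∈ T1, x i * (if i ∈ T1 then a else 1) = X1 * a := by
        rw [Finset.sum_congr rfl (fun i hi => by rw [if_pos hi]), ← Finset.sum_mul]
      have e2 : ∑ i ∈ T2, x i * (if i ∈ T1 then a else 1) = X2 := by
        exact Finset.sum_congr rfl (fun i hi => by
          rw [if_neg (Finset.disjoint_right.mp hdisj hi), mul_one])
      rw [e1, e2]; ring
    have hB1 : ((n : ℝ) - 1) * y + (y + z) * a - (n : ℝ) * (y + z) * (a * X1 + X2) = 0 := by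
      have hkey2 : a * ((n : ℝ) * X1 - 1) * (y + z)
          = (((n : ℝ) - 1) * ζ - (n : ℝ) * X2) * (y + z) := by rw [hkey]
      nlinarith [hζy, hkey2]
    clear_value ζ X1 X2 a
    unfold U
    rw [hS]
    refine add_le_add le_rfl (Finset.sum_le_sum fun j _ => ?_)
    by_cases hj : j ∈ T1
    · simp only [hj, if_true]
      have hz0 : ((n : ℝ) - 1) * y + (y + z) * a - (n : ℝ) * (y + z) * (a * X1 + X2) = 0 := hB1
      rw [hz0]
      simp
    · simp only [hj, if_false]
      have hBpos : 0 < ((n : ℝ) - 1) * y + (y + z) * 1 - (n : ℝ) * (y + z) * (a * X1 + X2) := by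
        have h : 0 < (y + z) * (1 - a) := mul_pos hyz (sub_pos.mpr ha1)
        have h' : (y + z) * (1 - a) = (y + z) * 1 - (y + z) * a := by ring
        linarith
      have hc : 0 ≤ x j / ((n : ℝ) - 1) *
          (((n : ℝ) - 1) * y + (y + z) * 1 - (n : ℝ) * (y + z) * (a * X1 + X2)) :=
        le_of_lt (mul_pos (div_pos (hxpos j) hn1') hBpos)
      calc x j / ((n : ℝ) - 1) *
            (((n : ℝ) - 1) * y + (y + z) * 1 - (n : ℝ) * (y + z) * (a * X1 + X2)) * β j
          ≤ x j / ((n : ℝ) - 1) *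
            (((n : ℝ) - 1) * y + (y + z) * 1 - (n : ℝ) * (y + z) * (a * X1 + X2)) * 1 :=
            mul_le_mul_of_nonneg_left (hβ j).2 hc
        _ = _ := by rw [mul_one]
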